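/- Let T > 0 and let Y : ℝ → ℍ be twice differentiable with ‖Y(t)‖ = 1 for all t ∈ [0,T]. Let ω1, ω2, ω3 : ℝ → ℝ be functions, with ω2 and ω3 differentiable, such that Y'(t)·Y(t)* = ω1(t) e1 + ω2(t) e2 + ω3(t) e3 and ω2(t)² + ω3(t)² > 0 for all t ∈ [0,T]. Let θ : ℝ → ℝ be differentiable with cos θ(t) = ω2(t)/√(ω2(t)² + ω3(t)²) and sin θ(t) = −ω3(t)/√(ω2(t)² + ω3(t)²) on [0,T]. Then for every n ∈ {0,1,2,3}, the curve q(t) = e1ⁿ · exp(θ(t)/2 · e1) · Y(t) satisfies ‖q(t)‖ = 1 and q'(t) = (u1(t) e1 + u2(t) e2) · q(t) for all t ∈ [0,T], where u1 = ω1 + (ω3·ω2' − ω2·ω3')/(2(ω2² + ω3²)) and u2 = (−1)ⁿ · √(ω2² + ω3²). -/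

import Mathlib

open Quaternion Set

/-- The imaginary quaternion unit `i`. -/
noncomputable def e1 : ℍ[ℝ] := ⟨0, 1, 0, 0⟩
/-- The imaginary quaternion unit `j`. -/
noncomputable def e2 : ℍ[ℝ] := ⟨0, 0, 1, 0⟩
/-- The imaginary quaternion unit `k`. -/
noncomputable def e3 : ℍ[ℝ] := ⟨0, 0, 0, 1⟩

/-- `qexp φ = exp (φ e1) = cos φ + (sin φ) e1`. -/
noncomputable def qexp (φ : ℝ) : ℍ[ℝ] :=
  (Real.cos φ : ℍ[ℝ]) + (Real.sin φ : ℍ[ℝ]) * e1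

lemma aux_unique (T : ℝ) (hT : 0 < T) (f g : ℝ → ℝ) (f' g' : ℝ) (t : ℝ) (ht : t ∈ Icc (0:ℝ) T)
    (hf : HasDerivAt f f' t) (hg : HasDerivAt g g' t)
    (heq : ∀ s ∈ Icc (0:ℝ) T, f s = g s) : f' = g' := by
  have hud := (uniqueDiffOn_Icc hT) t ht
  have h1 : HasDerivWithinAt g f' (Icc 0 T) t :=
    (hf.hasDerivWithinAt).congr (fun y hy => (heq y hy).symm) (heq t ht).symm
  exact hud.eq_deriv _ h1 hg.hasDerivWithinAt

lemma theta_deriv (T : ℝ) (hT : 0 < T)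
    (ω2 ω3 ω2' ω3' θ θ' : ℝ → ℝ)
    (hω2 : ∀ t ∈ Icc (0:ℝ) T, HasDerivAt ω2 (ω2' t) t)
    (hω3 : ∀ t ∈ Icc (0:ℝ) T, HasDerivAt ω3 (ω3' t) t)
    (hpos : ∀ t ∈ Icc (0:ℝ) T, 0 < ω2 t ^ 2 + ω3 t ^ 2)
    (hθ : ∀ t ∈ Icc (0:ℝ) T, HasDerivAt θ (θ' t) t)
    (hcos : ∀ t ∈ Icc (0:ℝ) T, Real.cos (θ t) = ω2 t / Real.sqrt (ω2 t ^ 2 + ω3 t ^ 2))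
    (hsin : ∀ t ∈ Icc (0:ℝ) T, Real.sin (θ t) = - ω3 t / Real.sqrt (ω2 t ^ 2 + ω3 t ^ 2))
    (t : ℝ) (ht : t ∈ Icc (0:ℝ) T) :
    θ' t * (ω2 t ^ 2 + ω3 t ^ 2) = ω3 t * ω2' t - ω2 t * ω3' t := by
  have hpos' := hpos t ht
  have hr : 0 < Real.sqrt (ω2 t ^ 2 + ω3 t ^ 2) := Real.sqrt_pos.2 hpos'
  set r := Real.sqrt (ω2 t ^ 2 + ω3 t ^ 2) with hrdef
  have hr2 : r ^ 2 = ω2 t ^ 2 + ω3 t ^ 2 := Real.sq_sqrt hpos'.le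
  have hR : ∀ s ∈ Icc (0:ℝ) T, HasDerivAt (fun u => Real.sqrt (ω2 u ^ 2 + ω3 u ^ 2))
      ((ω2 s * ω2' s + ω3 s * ω3' s) / Real.sqrt (ω2 s ^ 2 + ω3 s ^ 2)) s := by
    intro s hs
    have hsq' : HasDerivAt (fun u => ω2 u ^ 2 + ω3 u ^ 2)
        (2 * ω2 s * ω2' s + 2 * ω3 s * ω3' s) s := by
      have := ((hω2 s hs).pow 2).add ((hω3 s hs).pow 2)
      exact this.congr_deriv (by push_cast; ring)
    have := (Real.hasDerivAt_sqrt (ne_of_gt (hpos s hs))).comp s hsq'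
    refine this.congr_deriv ?_
    have hrs : 0 < Real.sqrt (ω2 s ^ 2 + ω3 s ^ 2) := Real.sqrt_pos.2 (hpos s hs)
    field_simp
  have hg2 : HasDerivAt (fun u => ω2 u / Real.sqrt (ω2 u ^ 2 + ω3 u ^ 2))
      ((ω2' t * r - ω2 t * ((ω2 t * ω2' t + ω3 t * ω3' t) / r)) / r ^ 2) t :=
    (hω2 t ht).div (hR t ht) (ne_of_gt hr)
  have hg3 : HasDerivAt (fun u => - ω3 u / Real.sqrt (ω2 u ^ 2 + ω3 u ^ 2))
      ((-ω3' t * r - (- ω3 t) * ((ω2 t * ω2' t + ω3 t * ω3' t) / r)) / r ^ 2) t :=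
    ((hω3 t ht).neg).div (hR t ht) (ne_of_gt hr)
  have E2 : -Real.sin (θ t) * θ' t
      = (ω2' t * r - ω2 t * ((ω2 t * ω2' t + ω3 t * ω3' t) / r)) / r ^ 2 :=
    aux_unique T hT _ _ _ _ t ht ((hθ t ht).cos) hg2 hcos
  have E3 : Real.cos (θ t) * θ' t
      = (-ω3' t * r - (- ω3 t) * ((ω2 t * ω2' t + ω3 t * ω3' t) / r)) / r ^ 2 :=
    aux_unique T hT _ _ _ _ t ht ((hθ t ht).sin) hg3 hsin
  rw [hsin t ht] at E2
  rw [hcos t ht] at E3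
  rw [← hrdef] at E2 E3
  have hrne : r ≠ 0 := ne_of_gt hr
  field_simp at E2 E3
  have H : θ' t * (ω2 t ^ 2 + ω3 t ^ 2) * r ^ 3 = (ω3 t * ω2' t - ω2 t * ω3' t) * r ^ 3 := by
    linear_combination r * ω3 t * E2 + r * ω2 t * E3
  exact mul_right_cancel₀ (pow_ne_zero 3 hrne) H

lemma e1_sq : e1 * e1 = -1 := by
  ext <;> simp [Quaternion.re_mul, Quaternion.imI_mul, Quaternion.imJ_mul, Quaternion.imK_mul] <;> simp [e1]

lemma e1_pow2 : e1^2 = -1 := by rw [sq, e1_sq]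
lemma e1_pow3 : e1^3 = -e1 := by rw [pow_succ, e1_pow2, neg_one_mul]

lemma core0 (c s r w1 w2 w3 a : ℝ)
    (h1 : c^2 + s^2 = 1) (h2 : w2 = r*(2*c^2-1)) (h3 : w3 = -(r*(2*s*c))) :
    (((w1 + a : ℝ) : ℍ[ℝ]) * e1 + ((r : ℝ) : ℍ[ℝ]) * e2) * ((c : ℍ[ℝ]) + (s : ℍ[ℝ]) * e1)
      = (((-s*a) • (1:ℍ[ℝ]) + (c*a) • e1) +
          ((c : ℍ[ℝ]) + (s : ℍ[ℝ]) * e1) *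
            ((w1 : ℍ[ℝ]) * e1 + (w2 : ℍ[ℝ]) * e2 + (w3 : ℍ[ℝ]) * e3)) := by
  subst h2 h3
  ext <;>
      simp [Quaternion.re_mul, Quaternion.imI_mul, Quaternion.imJ_mul,
        Quaternion.imK_mul, Quaternion.re_coe, Quaternion.imI_coe, Quaternion.imJ_coe,
        Quaternion.imK_coe, ← Quaternion.coe_pow] <;> simp [e1, e2, e3] <;>
    first
      | ring1
      | linear_combination (-2*r*c)*h1
      | linear_combination (2*r*c)*h1
      | linear_combination (-2*r*s)*h1
      | linear_combination (2*r*s)*h1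

lemma swap (n : ℕ) (hn : n ≤ 3) (u v : ℝ) :
    ((u : ℍ[ℝ]) * e1 + ((((-1:ℝ)^n * v : ℝ)) : ℍ[ℝ]) * e2) * e1^n
      = e1^n * ((u : ℍ[ℝ]) * e1 + (v : ℍ[ℝ]) * e2) := by
  interval_cases n <;>
    simp only [pow_zero, pow_one, e1_pow2, e1_pow3, mul_one, one_mul] <;>
    ext <;>
    simp [Quaternion.re_mul, Quaternion.imI_mul, Quaternion.imJ_mul,
      Quaternion.imK_mul, Quaternion.re_coe, Quaternion.imI_coe, Quaternion.imJ_coe,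
      Quaternion.imK_coe, ← Quaternion.coe_pow] <;> simp [e1, e2] <;> first | ring1 | norm_num

lemma core (n : ℕ) (hn : n ≤ 3) (c s r w1 w2 w3 a : ℝ)
    (h1 : c^2 + s^2 = 1) (h2 : w2 = r*(2*c^2-1)) (h3 : w3 = -(r*(2*s*c))) :
    (((w1 + a : ℝ) : ℍ[ℝ]) * e1 + ((((-1:ℝ)^n * r : ℝ)) : ℍ[ℝ]) * e2) *
        (e1^n * ((c : ℍ[ℝ]) + (s : ℍ[ℝ]) * e1))
      = e1^n * ((((-s*a) • (1:ℍ[ℝ]) + (c*a) • e1) +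
          ((c : ℍ[ℝ]) + (s : ℍ[ℝ]) * e1) *
            ((w1 : ℍ[ℝ]) * e1 + (w2 : ℍ[ℝ]) * e2 + (w3 : ℍ[ℝ]) * e3))) := by
  rw [← mul_assoc, swap n hn, mul_assoc, core0 c s r w1 w2 w3 a h1 h2 h3]

lemma norm_e1 : ‖e1‖ = 1 := by
  have he1sq : ‖e1‖ * ‖e1‖ = 1 := by
    rw [← Quaternion.normSq_eq_norm_mul_self, Quaternion.normSq_def']; simp [e1]
  rcases mul_self_eq_one_iff.mp he1sq with h | h
  · exact h
  · nlinarith [norm_nonneg e1]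

lemma qexp_eq (φ : ℝ) : qexp φ = ⟨Real.cos φ, Real.sin φ, 0, 0⟩ := by
  ext <;> simp [qexp, Quaternion.re_mul, Quaternion.imI_mul, Quaternion.imJ_mul,
    Quaternion.imK_mul, Quaternion.re_coe, Quaternion.imI_coe, Quaternion.imJ_coe,
    Quaternion.imK_coe] <;> simp [e1]

lemma norm_qexp (φ : ℝ) : ‖qexp φ‖ = 1 := by
  have hsq : ‖qexp φ‖ * ‖qexp φ‖ = 1 := by
    rw [← Quaternion.normSq_eq_norm_mul_self, Quaternion.normSq_def', qexp_eq]
    simp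
  rcases mul_self_eq_one_iff.mp hsq with h | h
  · exact h
  · nlinarith [norm_nonneg (qexp φ)]

lemma qexp_smul (φ : ℝ) : qexp φ = Real.cos φ • (1:ℍ[ℝ]) + Real.sin φ • e1 := by
  rw [qexp, ← Quaternion.coe_mul_eq_smul, ← Quaternion.coe_mul_eq_smul, mul_one]

theorem stmt_0
    (T : ℝ) (hT : 0 < T)
    (Y Y' Y'' : ℝ → ℍ[ℝ])
    (hY : ∀ t ∈ Icc (0:ℝ) T, HasDerivAt Y (Y' t) t)
    (hY' : ∀ t ∈ Icc (0:ℝ) T, HasDerivAt Y' (Y'' t) t)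
    (hYnorm : ∀ t ∈ Icc (0:ℝ) T, ‖Y t‖ = 1)
    (ω1 ω2 ω3 ω2' ω3' : ℝ → ℝ)
    (hω2 : ∀ t ∈ Icc (0:ℝ) T, HasDerivAt ω2 (ω2' t) t)
    (hω3 : ∀ t ∈ Icc (0:ℝ) T, HasDerivAt ω3 (ω3' t) t)
    (hYY : ∀ t ∈ Icc (0:ℝ) T,
      Y' t * star (Y t) =
        ((ω1 t : ℝ) : ℍ[ℝ]) * e1 + ((ω2 t : ℝ) : ℍ[ℝ]) * e2 + ((ω3 t : ℝ) : ℍ[ℝ]) * e3)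
    (hpos : ∀ t ∈ Icc (0:ℝ) T, 0 < ω2 t ^ 2 + ω3 t ^ 2)
    (θ θ' : ℝ → ℝ)
    (hθ : ∀ t ∈ Icc (0:ℝ) T, HasDerivAt θ (θ' t) t)
    (hcos : ∀ t ∈ Icc (0:ℝ) T,
      Real.cos (θ t) = ω2 t / Real.sqrt (ω2 t ^ 2 + ω3 t ^ 2))
    (hsin : ∀ t ∈ Icc (0:ℝ) T,
      Real.sin (θ t) = - ω3 t / Real.sqrt (ω2 t ^ 2 + ω3 t ^ 2)) :
    ∀ n : ℕ, n ≤ 3 → ∀ t ∈ Icc (0:ℝ) T,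
      ‖e1 ^ n * qexp (θ t / 2) * Y t‖ = 1 ∧
      HasDerivAt (fun s => e1 ^ n * qexp (θ s / 2) * Y s)
        (((((ω1 t + (ω3 t * ω2' t - ω2 t * ω3' t) /
              (2 * (ω2 t ^ 2 + ω3 t ^ 2))) : ℝ) : ℍ[ℝ]) * e1 +
          ((((-1 : ℝ) ^ n * Real.sqrt (ω2 t ^ 2 + ω3 t ^ 2)) : ℝ) : ℍ[ℝ]) * e2) *
          (e1 ^ n * qexp (θ t / 2) * Y t)) t := by
  intro n hn t ht
  have hpos' := hpos t ht
  have hr : 0 < Real.sqrt (ω2 t ^ 2 + ω3 t ^ 2) := Real.sqrt_pos.2 hpos'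
  set r := Real.sqrt (ω2 t ^ 2 + ω3 t ^ 2) with hrdef
  have hrne : r ≠ 0 := ne_of_gt hr
  have hr2 : r ^ 2 = ω2 t ^ 2 + ω3 t ^ 2 := Real.sq_sqrt hpos'.le
  constructor
  · rw [norm_mul, norm_mul, norm_pow, norm_e1, norm_qexp, hYnorm t ht]
    simp
  -- derivative
  set c := Real.cos (θ t / 2) with hcdef
  set s := Real.sin (θ t / 2) with hsdef
  have h1 : c ^ 2 + s ^ 2 = 1 := by
    rw [hcdef, hsdef, add_comm]; exact Real.sin_sq_add_cos_sq _
  have hth2 : (2:ℝ) * (θ t / 2) = θ t := by ring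
  have h2 : ω2 t = r * (2*c^2-1) := by
    have := hcos t ht
    rw [← hth2, Real.cos_two_mul] at this
    rw [hcdef]
    field_simp at this
    linarith [this]
  have h3 : ω3 t = -(r*(2*s*c)) := by
    have := hsin t ht
    rw [← hth2, Real.sin_two_mul] at this
    rw [hsdef, hcdef]
    field_simp at this
    linarith [this]
  have hθ'eq := theta_deriv T hT ω2 ω3 ω2' ω3' θ θ' hω2 hω3 hpos hθ hcos hsin t ht
  have hu1 : ω1 t + (ω3 t * ω2' t - ω2 t * ω3' t) / (2 * (ω2 t ^ 2 + ω3 t ^ 2))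
      = ω1 t + θ' t / 2 := by
    have hne : (ω2 t ^ 2 + ω3 t ^ 2) ≠ 0 := ne_of_gt hpos'
    field_simp
    linarith [hθ'eq]
  -- Y' t = Ω * Y t
  have hYs : star (Y t) * Y t = 1 := by
    have hns : normSq (Y t) = 1 := by
      rw [Quaternion.normSq_eq_norm_mul_self, hYnorm t ht]; ring
    rw [Quaternion.star_mul_self, hns]
    exact_mod_cast rfl
  have hYp : Y' t = (((ω1 t : ℝ) : ℍ[ℝ]) * e1 + ((ω2 t : ℝ) : ℍ[ℝ]) * e2
      + ((ω3 t : ℝ) : ℍ[ℝ]) * e3) * Y t := by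
    calc Y' t = Y' t * (star (Y t) * Y t) := by rw [hYs, mul_one]
    _ = (Y' t * star (Y t)) * Y t := by rw [mul_assoc]
    _ = _ := by rw [hYY t ht]
  -- derivative of qexp part
  have hc' : HasDerivAt (fun u => Real.cos (θ u / 2)) (-s * (θ' t / 2)) t := by
    have := ((hθ t ht).div_const 2).cos
    simpa [hsdef] using this
  have hs' : HasDerivAt (fun u => Real.sin (θ u / 2)) (c * (θ' t / 2)) t := by
    have := ((hθ t ht).div_const 2).sin
    simpa [hcdef] using this
  have hQ : HasDerivAt (fun u => qexp (θ u / 2))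
      ((-s * (θ' t / 2)) • (1:ℍ[ℝ]) + (c * (θ' t / 2)) • e1) t := by
    simp only [qexp_smul]
    exact (hc'.smul_const (1:ℍ[ℝ])).add (hs'.smul_const e1)
  have hprod : HasDerivAt (fun u => e1 ^ n * (qexp (θ u / 2) * Y u))
      (e1 ^ n * (((-s * (θ' t / 2)) • (1:ℍ[ℝ]) + (c * (θ' t / 2)) • e1) * Y t
        + qexp (θ t / 2) * Y' t)) t :=
    (hQ.mul (hY t ht)).const_mul _
  have hfeq : (fun u => e1 ^ n * (qexp (θ u / 2) * Y u))
      = (fun u => e1 ^ n * qexp (θ u / 2) * Y u) := by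
    funext u; rw [mul_assoc]
  rw [hfeq] at hprod
  convert hprod using 1
  rw [hu1, hYp]
  have hkey := core n hn c s r (ω1 t) (ω2 t) (ω3 t) (θ' t / 2) h1 h2 h3
  have hqx : qexp (θ t / 2) = ((c : ℍ[ℝ]) + (s : ℍ[ℝ]) * e1) := rfl
  rw [hqx]
  calc (((ω1 t + θ' t / 2 : ℝ) : ℍ[ℝ]) * e1 + ((((-1:ℝ)^n * r : ℝ)) : ℍ[ℝ]) * e2) *
        (e1 ^ n * ((c : ℍ[ℝ]) + (s : ℍ[ℝ]) * e1) * Y t)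
      = ((((ω1 t + θ' t / 2 : ℝ) : ℍ[ℝ]) * e1 + ((((-1:ℝ)^n * r : ℝ)) : ℍ[ℝ]) * e2) *
        (e1 ^ n * ((c : ℍ[ℝ]) + (s : ℍ[ℝ]) * e1))) * Y t := by noncomm_ring
    _ = (e1 ^ n * ((((-s * (θ' t / 2)) • (1:ℍ[ℝ]) + (c * (θ' t / 2)) • e1) +
          ((c : ℍ[ℝ]) + (s : ℍ[ℝ]) * e1) *
            (((ω1 t : ℝ) : ℍ[ℝ]) * e1 + ((ω2 t : ℝ) : ℍ[ℝ]) * e2 + ((ω3 t : ℝ) : ℍ[ℝ]) * e3)))) * Y t := by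
        rw [hkey]
    _ = e1 ^ n * (((-s * (θ' t / 2)) • (1:ℍ[ℝ]) + (c * (θ' t / 2)) • e1) * Y t +
          ((c : ℍ[ℝ]) + (s : ℍ[ℝ]) * e1) *
            ((((ω1 t : ℝ) : ℍ[ℝ]) * e1 + ((ω2 t : ℝ) : ℍ[ℝ]) * e2 + ((ω3 t : ℝ) : ℍ[ℝ]) * e3) * Y t)) := by
        noncomm_ring
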